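/- arXiv:1802.07178 — 2 statements merged into one kernel-verified Lean document; each statement's English description precedes it below -/
import Mathlib

section
/- (Structure Theorem for PAN) Let m be a deficient natural number, e ≥ 1 a natural number, and p a prime with gcd(m, p) = 1. Then m·p^e is primitive abundant if and only if all of the following hold (as inequalities of rationals): (1) p^e/σ(p^{e−1}) < c(m); (2) p^e/σ(p^{e−1}) > σ(m) / (d(m) + 2m/(σ(q^α) − 1)) for every prime power q^α exactly dividing m (with α ≥ 1); and (3) either e = 1 or p^{e−1}/σ(p^{e−2}) > c(m). -/
/-- The sum of all divisors of `n`. -/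
def sigma1 (n : ℕ) : ℕ := ∑ d ∈ n.divisors, d

/-- `n` is abundant if `σ(n) > 2n`. -/
def Abundant (n : ℕ) : Prop := 2 * n < sigma1 n

/-- `n` is deficient if `σ(n) < 2n`. -/
def Deficient (n : ℕ) : Prop := sigma1 n < 2 * n

/-- A primitive abundant number: abundant and all proper divisors deficient. -/
def PrimitiveAbundant (n : ℕ) : Prop :=
  Abundant n ∧ ∀ d ∈ n.properDivisors, Deficient d

/-- The center of a deficient number `m`: `c(m) = σ(m)/d(m)` where `d(m) = 2m - σ(m)`. -/
def center (n : ℕ) : ℚ := (sigma1 n : ℚ) / (2 * (n : ℚ) - (sigma1 n : ℚ))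

lemma sigma1_eq (n : ℕ) : sigma1 n = ArithmeticFunction.sigma 1 n := by
  simp [sigma1, ArithmeticFunction.sigma_apply]

lemma sigma1_mul {a b : ℕ} (h : Nat.Coprime a b) :
    sigma1 (a * b) = sigma1 a * sigma1 b := by
  simp only [sigma1_eq]
  exact (ArithmeticFunction.isMultiplicative_sigma).map_mul_of_coprime h

lemma sigma1_pp (p e : ℕ) (hp : p.Prime) :
    sigma1 (p ^ e) = ∑ i ∈ Finset.range (e + 1), p ^ i := by
  rw [sigma1, Nat.divisors_prime_pow hp, Finset.sum_map]
  rfl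

lemma sigma1_pos {n : ℕ} (h : 0 < n) : 0 < sigma1 n := by
  rw [sigma1]
  exact Finset.sum_pos (fun d hd => Nat.pos_of_mem_divisors hd)
    ⟨n, Nat.mem_divisors_self n h.ne'⟩

lemma sigma1_pp_succ {p : ℕ} (hp : p.Prime) {e : ℕ} (he : 1 ≤ e) :
    sigma1 (p ^ e) = sigma1 (p ^ (e - 1)) + p ^ e := by
  obtain ⟨f, rfl⟩ : ∃ f, e = f + 1 := ⟨e - 1, by omega⟩
  rw [sigma1_pp p _ hp, sigma1_pp p _ hp]
  simp [Finset.sum_range_succ]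

lemma sigma1_pp_mul {q : ℕ} (hq : q.Prime) {α : ℕ} (hα : 1 ≤ α) :
    sigma1 (q ^ α) = q * sigma1 (q ^ (α - 1)) + 1 := by
  obtain ⟨β, rfl⟩ : ∃ β, α = β + 1 := ⟨α - 1, by omega⟩
  rw [sigma1_pp q _ hq, sigma1_pp q _ hq]
  simp only [Nat.add_sub_cancel]
  rw [Finset.sum_range_succ', Finset.mul_sum]
  simp [pow_succ, mul_comm]

lemma deficient_of_dvd {d D : ℕ} (hdvd : d ∣ D) (hD : Deficient D) : Deficient d := by
  have hD0 : 0 < D := by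
    by_contra h
    push_neg at h
    interval_cases D
    · simp [Deficient, sigma1] at hD
  obtain ⟨k, rfl⟩ := hdvd
  have hk : 0 < k := Nat.pos_of_mul_pos_left hD0
  have key : sigma1 d * k ≤ sigma1 (d * k) := by
    rw [sigma1, sigma1, Finset.sum_mul]
    have himg : (∑ x ∈ d.divisors.image (· * k), x) = ∑ x ∈ d.divisors, x * k :=
      Finset.sum_image (f := id) (fun a _ b _ h => Nat.eq_of_mul_eq_mul_right hk h)
    rw [← himg]
    apply Finset.sum_le_sum_of_subset
    intro x hx
    simp only [Finset.mem_image] at hx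
    obtain ⟨a, ha, rfl⟩ := hx
    exact Nat.mem_divisors.mpr ⟨mul_dvd_mul (Nat.mem_divisors.mp ha).1 dvd_rfl, hD0.ne'⟩
  simp only [Deficient] at hD ⊢
  have h2 : sigma1 d * k < 2 * d * k := by
    calc sigma1 d * k ≤ sigma1 (d * k) := key
    _ < 2 * (d * k) := hD
    _ = 2 * d * k := by ring
  exact lt_of_mul_lt_mul_right h2 (le_of_lt hk)

lemma propdiv_iff {n : ℕ} (hn : 0 < n) :
    (∀ d ∈ n.properDivisors, Deficient d) ↔
      ∀ q : ℕ, q.Prime → q ∣ n → Deficient (n / q) := by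
  constructor
  · intro h q hq hqn
    apply h
    rw [Nat.mem_properDivisors]
    exact ⟨Nat.div_dvd_of_dvd hqn, Nat.div_lt_self hn hq.one_lt⟩
  · intro h d hd
    rw [Nat.mem_properDivisors] at hd
    obtain ⟨hddvd, hdlt⟩ := hd
    have h1 : n / d ≠ 1 := by
      intro h1
      have := Nat.eq_mul_of_div_eq_right hddvd h1
      omega
    obtain ⟨q, hq, hqdvd⟩ := Nat.exists_prime_and_dvd h1
    have hqn : q ∣ n := hqdvd.trans (Nat.div_dvd_of_dvd hddvd)
    have hdnq : d ∣ n / q := by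
      rw [Nat.dvd_div_iff_mul_dvd hqn, mul_comm]
      calc d * q ∣ d * (n / d) := mul_dvd_mul_left d hqdvd
      _ = n := Nat.mul_div_cancel' hddvd
    exact deficient_of_dvd hdnq (h q hq hqn)

lemma rat_ab (a b M P : ℚ) (hb : 0 < b) (hD : 0 < 2*M - a) :
    P / b < a / (2*M - a) ↔ 2*(M*P) < a*(b+P) := by
  rw [div_lt_div_iff₀ hb hD]
  constructor <;> intro h <;> nlinarith

lemma rat_def (a b M P : ℚ) (hb : 0 < b) (hD : 0 < 2*M - a) :
    a / (2*M - a) < P / b ↔ a*(b+P) < 2*(M*P) := by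
  rw [div_lt_div_iff₀ hD hb]
  constructor <;> intro h <;> nlinarith

lemma ratkey (qq u s' T P Qa' mm' M t s D : ℚ)
    (hq : 0 < qq) (hu : 0 < u) (hT : 0 < T) (hP : 0 < P) (hM0 : 0 < M)
    (ht : t = qq * u + 1) (hs : s = t * s')
    (hM : M = qq * Qa' * mm') (hD : D = 2 * M - s) (hD0 : 0 < D) :
    (u * s' * (T + P) < 2 * (Qa' * mm') * P ↔
      s / (D + 2 * M / (t - 1)) < P / T) := by
  have ht1 : t - 1 = qq * u := by rw [ht]; ring
  have hqu : 0 < qq * u := mul_pos hq hu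
  have hden : 0 < D + 2 * M / (t - 1) := by
    rw [ht1]
    exact add_pos hD0 (div_pos (by linarith) hqu)
  rw [div_lt_div_iff₀ hden hT]
  conv_rhs => rw [← mul_lt_mul_iff_left₀ hqu]
  have hexp : P * (D + 2 * M / (t - 1)) * (qq * u) = P * (D * (qq*u) + 2*M) := by
    rw [ht1]; field_simp
  rw [hexp]
  have ident : P * (D * (qq*u) + 2*M) - s * T * (qq*u)
      = (t * qq) * (2 * (Qa' * mm') * P - u * s' * (T + P)) := by
    subst hD hs hM ht; ring
  have hc : 0 < t * qq := by rw [ht]; positivity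
  constructor
  · intro h
    nlinarith [mul_pos hc (by linarith : (0:ℚ) < 2 * (Qa' * mm') * P - u * s' * (T + P))]
  · intro h
    by_contra hn
    push_neg at hn
    nlinarith [mul_nonneg hc.le (by linarith : (0:ℚ) ≤ u * s' * (T + P) - 2 * (Qa' * mm') * P)]

/-- Structure Theorem for PAN: for `m` deficient, `e ≥ 1` and `p` a prime
coprime with `m`, `m·p^e` is primitive abundant iff
(1) `p^e/σ(p^{e-1}) < c(m)`;
(2) `p^e/σ(p^{e-1}) > σ(m)/(d(m) + 2m/(σ(q^α) − 1))` for each `q^α ∣∣ m`; and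
(3) `e = 1` or `p^{e-1}/σ(p^{e-2}) > c(m)`. -/
theorem stmt7 (m e p : ℕ) (hm : 1 ≤ m) (hdef : Deficient m)
    (he : 1 ≤ e) (hp : p.Prime) (hcop : Nat.Coprime m p) :
    PrimitiveAbundant (m * p ^ e) ↔
      ((p : ℚ) ^ e / (sigma1 (p ^ (e - 1)) : ℚ) < center m ∧
       (∀ q α : ℕ, q.Prime → 1 ≤ α → q ^ α ∣ m → ¬ q ^ (α + 1) ∣ m →
          (sigma1 m : ℚ) /
              ((2 * (m : ℚ) - (sigma1 m : ℚ)) + 2 * (m : ℚ) / ((sigma1 (q ^ α) : ℚ) - 1))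
            < (p : ℚ) ^ e / (sigma1 (p ^ (e - 1)) : ℚ)) ∧
       (e = 1 ∨ center m < (p : ℚ) ^ (e - 1) / (sigma1 (p ^ (e - 2)) : ℚ))) := by
  have hm0 : 0 < m := hm
  have hp0 : 0 < p := hp.pos
  have hn0 : 0 < m * p ^ e := by positivity
  have hcope : ∀ k, Nat.Coprime m (p ^ k) := fun k => hcop.pow_right k
  have hσm0 : 0 < sigma1 m := sigma1_pos hm0
  have hDQ : (0:ℚ) < 2 * (m:ℚ) - (sigma1 m : ℚ) := by
    have h0 : sigma1 m < 2 * m := hdef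
    have h2 : ((sigma1 m : ℚ)) < ((2 * m : ℕ) : ℚ) := by exact_mod_cast h0
    push_cast at h2
    linarith
  -- Part A : abundance
  have hA : Abundant (m * p ^ e) ↔
      (p : ℚ) ^ e / (sigma1 (p ^ (e - 1)) : ℚ) < center m := by
    unfold Abundant center
    rw [sigma1_mul (hcope e), sigma1_pp_succ hp he]
    rw [rat_ab (sigma1 m : ℚ) (sigma1 (p ^ (e-1)) : ℚ) (m : ℚ) ((p:ℚ)^e)
      (by exact_mod_cast sigma1_pos (pow_pos hp0 _)) hDQ]
    rw [← Nat.cast_lt (α := ℚ)]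
    push_cast
    constructor <;> intro h <;> nlinarith
  -- Part C : condition (3)
  have hC : Deficient (m * p ^ (e - 1)) ↔
      (e = 1 ∨ center m < (p : ℚ) ^ (e - 1) / (sigma1 (p ^ (e - 2)) : ℚ)) := by
    rcases eq_or_lt_of_le he with h1 | h2
    · refine iff_of_true ?_ (Or.inl h1.symm)
      rw [← h1]
      simpa using hdef
    · obtain ⟨f, rfl⟩ : ∃ f, e = f + 1 := ⟨e - 1, by omega⟩
      have hf : 1 ≤ f := by omega
      have he1 : f + 1 - 1 = f := by omega
      have he2 : f + 1 - 2 = f - 1 := by omega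
      rw [he1, he2, or_iff_right (by omega : ¬ f + 1 = 1)]
      unfold Deficient center
      rw [sigma1_mul (hcope f), sigma1_pp_succ hp hf]
      rw [rat_def (sigma1 m : ℚ) (sigma1 (p ^ (f-1)) : ℚ) (m : ℚ) ((p:ℚ)^f)
        (by exact_mod_cast sigma1_pos (pow_pos hp0 _)) hDQ]
      rw [← Nat.cast_lt (α := ℚ)]
      push_cast
      constructor <;> intro h <;> nlinarith
  -- Part B : condition (2)
  have hB : ∀ q α : ℕ, q.Prime → 1 ≤ α → q ^ α ∣ m → ¬ q ^ (α + 1) ∣ m →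
      (Deficient ((m * p ^ e) / q) ↔
        (sigma1 m : ℚ) /
            ((2 * (m : ℚ) - (sigma1 m : ℚ)) + 2 * (m : ℚ) / ((sigma1 (q ^ α) : ℚ) - 1))
          < (p : ℚ) ^ e / (sigma1 (p ^ (e - 1)) : ℚ)) := by
    intro q α hq hα hqα hqα1
    set m' := m / q ^ α with hm'def
    have hmeq : m = q ^ α * m' := (Nat.mul_div_cancel' hqα).symm
    have hqm' : ¬ q ∣ m' := by
      intro hdq
      apply hqα1
      rw [hmeq, pow_succ]
      exact mul_dvd_mul (dvd_refl _) hdq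
    have hm'0 : 0 < m' := by
      rcases Nat.eq_zero_or_pos m' with h | h
      · rw [hmeq, h, mul_zero] at hm0; omega
      · exact h
    have hqm : q ∣ m := by
      rw [hmeq]
      exact Dvd.dvd.mul_right (dvd_pow_self q (by omega : α ≠ 0)) m'
    have hqp : Nat.Coprime q p := Nat.Coprime.coprime_dvd_left hqm hcop
    have hcqm' : Nat.Coprime q m' := (hq.coprime_iff_not_dvd).mpr hqm'
    have hcm'pe : Nat.Coprime m' (p ^ e) :=
      Nat.Coprime.coprime_dvd_left (Dvd.intro_left _ hmeq.symm) (hcope e)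
    have hqαsplit : q ^ α = q * q ^ (α - 1) := by
      conv_lhs => rw [show α = 1 + (α - 1) by omega]
      rw [pow_add, pow_one]
    -- n / q = q^(α-1) * (m' * p^e)
    have hnq : (m * p ^ e) / q = q ^ (α - 1) * (m' * p ^ e) := by
      have h : m * p ^ e = q * (q ^ (α - 1) * (m' * p ^ e)) := by
        rw [hmeq, hqαsplit]; ring
      rw [h, Nat.mul_div_cancel_left _ hq.pos]
    have hcop1 : Nat.Coprime (q ^ (α - 1)) (m' * p ^ e) :=
      Nat.Coprime.pow_left _ (hcqm'.mul_right (hqp.pow_right e))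
    have hσnq : sigma1 ((m * p ^ e) / q) =
        sigma1 (q ^ (α - 1)) * (sigma1 m' * sigma1 (p ^ e)) := by
      rw [hnq, sigma1_mul hcop1, sigma1_mul hcm'pe]
    have hσmeq : sigma1 m = sigma1 (q ^ α) * sigma1 m' := by
      rw [hmeq, sigma1_mul (Nat.Coprime.pow_left _ hcqm')]
    have hkey := ratkey (q:ℚ) (sigma1 (q^(α-1)):ℚ) (sigma1 m':ℚ) (sigma1 (p^(e-1)):ℚ)
      ((p:ℚ)^e) ((q:ℚ)^(α-1)) (m':ℚ) (m:ℚ) (sigma1 (q^α):ℚ) (sigma1 m:ℚ)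
      (2*(m:ℚ) - (sigma1 m:ℚ))
      (by exact_mod_cast hq.pos)
      (by exact_mod_cast sigma1_pos (pow_pos hq.pos _))
      (by exact_mod_cast sigma1_pos (pow_pos hp0 _))
      (by positivity)
      (by exact_mod_cast hm0)
      (by exact_mod_cast sigma1_pp_mul hq hα)
      (by exact_mod_cast hσmeq)
      (by exact_mod_cast (show m = q * q ^ (α-1) * m' from by rw [hmeq, hqαsplit]))
      rfl hDQ
    rw [← hkey]
    unfold Deficient
    rw [hnq, sigma1_mul hcop1, sigma1_mul hcm'pe, sigma1_pp_succ hp he,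
      ← Nat.cast_lt (α := ℚ)]
    push_cast
    constructor <;> intro h <;> nlinarith
  -- n / p
  have hnp : (m * p ^ e) / p = m * p ^ (e - 1) := by
    have h : m * p ^ e = (m * p ^ (e - 1)) * p := by
      rw [mul_assoc, ← pow_succ]
      congr 2
      omega
    rw [h, Nat.mul_div_cancel _ hp.pos]
  constructor
  · rintro ⟨hab, hprop⟩
    have hprop' := (propdiv_iff hn0).mp hprop
    refine ⟨hA.mp hab, ?_, ?_⟩
    · intro q α hq hα hd1 hd2
      have hqm : q ∣ m := (dvd_pow_self q (by omega : α ≠ 0)).trans hd1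
      exact (hB q α hq hα hd1 hd2).mp
        (hprop' q hq (hqm.mul_right _))
    · have hpd : p ∣ m * p ^ e := Dvd.dvd.mul_left (dvd_pow_self p (by omega : e ≠ 0)) m
      have := hprop' p hp hpd
      rw [hnp] at this
      exact hC.mp this
  · rintro ⟨h1, h2, h3⟩
    refine ⟨hA.mpr h1, (propdiv_iff hn0).mpr ?_⟩
    intro q hq hqn
    rcases (Nat.Prime.dvd_mul hq).mp hqn with hqm | hqpe
    · set α := m.factorization q with hαdef
      have hα1 : 1 ≤ α := hq.factorization_pos_of_dvd hm0.ne' hqm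
      have hd1 : q ^ α ∣ m := Nat.ordProj_dvd m q
      have hd2 : ¬ q ^ (α + 1) ∣ m := Nat.pow_succ_factorization_not_dvd hm0.ne' hq
      exact (hB q α hq hα1 hd1 hd2).mpr (h2 q α hq hα1 hd1 hd2)
    · have hqp' : q = p := (Nat.prime_dvd_prime_iff_eq hq hp).mp (hq.dvd_of_dvd_pow hqpe)
      subst hqp'
      rw [hnp]
      exact hC.mpr h3
end

section
/- Let p₁ < ⋯ < p_k be primes such that m = p₁·p₂ ⋯ p_k is deficient, and let p > p_k be a prime such that m·p is abundant. Then m·p is primitive abundant. -/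
lemma sigma1_mul_of_coprime {a b : ℕ} (h : a.Coprime b) :
    sigma1 (a * b) = sigma1 a * sigma1 b := Nat.Coprime.sum_divisors_mul h

lemma sigma1_prime {p : ℕ} (hp : p.Prime) : sigma1 p = p + 1 := by
  rw [sigma1, hp.divisors, Finset.sum_insert (by simp [hp.one_lt.ne]), Finset.sum_singleton]
  omega

lemma sigma1_dvd_le {d n : ℕ} (h : d ∣ n) (hn : 0 < n) :
    sigma1 d * n ≤ sigma1 n * d := by
  obtain ⟨c, rfl⟩ := h
  have hd : 0 < d := Nat.pos_of_ne_zero (by rintro rfl; simp at hn)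
  have hc : 0 < c := Nat.pos_of_ne_zero (by rintro rfl; simp at hn)
  have key : sigma1 d * c ≤ sigma1 (d * c) := by
    rw [sigma1, sigma1, Finset.sum_mul]
    have himg : ∑ x ∈ d.divisors.image (· * c), (x : ℕ) = ∑ x ∈ d.divisors, x * c :=
      Finset.sum_image (fun a _ b _ hab => Nat.eq_of_mul_eq_mul_right hc hab)
    rw [← himg]
    apply Finset.sum_le_sum_of_subset
    intro y hy
    simp only [Finset.mem_image, Nat.mem_divisors] at hy ⊢
    obtain ⟨x, ⟨hx, _⟩, rfl⟩ := hy
    exact ⟨mul_dvd_mul_right hx c, by omega⟩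
  calc sigma1 d * (d * c) = sigma1 d * c * d := by ring
    _ ≤ sigma1 (d * c) * d := Nat.mul_le_mul_right _ key

lemma deficient_of_dvd_s9 {d n : ℕ} (h : d ∣ n) (hn : 0 < n) (hdef : Deficient n) :
    Deficient d := by
  have h1 := sigma1_dvd_le h hn
  have hd : 0 < d := Nat.pos_of_dvd_of_pos h hn
  unfold Deficient at *
  nlinarith

/-- If `p₁ < ⋯ < p_k` are primes with `m = p₁⋯p_k` deficient and `p > p_k` is a
prime such that `m·p` is abundant, then `m·p` is primitive abundant. -/
theorem stmt9 (k : ℕ) (ps : Fin k → ℕ) (hps : ∀ i, (ps i).Prime)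
    (hmono : StrictMono ps) (m : ℕ) (hm : m = ∏ i, ps i)
    (hdef : Deficient m) (p : ℕ) (hp : p.Prime) (hgt : ∀ i, ps i < p)
    (hab : Abundant (m * p)) :
    PrimitiveAbundant (m * p) := by
  have hm0 : 0 < m := hm ▸ Finset.prod_pos (fun i _ => (hps i).pos)
  -- any prime divisor of m is some ps i, hence < p
  have hprime_lt : ∀ q : ℕ, q.Prime → q ∣ m → q < p := by
    intro q hq hqm
    rw [hm] at hqm
    obtain ⟨i, _, hqi⟩ := hq.prime.exists_mem_finset_dvd hqm
    rcases ((hps i).eq_one_or_self_of_dvd q hqi) with h | h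
    · exact absurd h hq.one_lt.ne'
    · exact h ▸ hgt i
  have hpm : ¬ p ∣ m := fun h => lt_irrefl p (hprime_lt p hp h)
  have hco : m.Coprime p := ((hp.coprime_iff_not_dvd).mpr hpm).symm
  -- m is squarefree
  have hsf : Squarefree m := by
    have hall : ∀ s : Finset (Fin k), Squarefree (∏ i ∈ s, ps i) := by
      intro s
      induction s using Finset.induction with
      | empty => simp
      | insert a s ha ih =>
        rw [Finset.prod_insert ha, Nat.squarefree_mul_iff]
        refine ⟨?_, (hps a).squarefree, ih⟩
        rw [Nat.coprime_prod_right_iff]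
        intro i hi
        exact (Nat.coprime_primes (hps a) (hps i)).2
          (fun h => ha (by rw [hmono.injective h]; exact hi))
    rw [hm]; exact hall Finset.univ
  constructor
  · exact hab
  intro d hd
  rw [Nat.mem_properDivisors] at hd
  obtain ⟨hdvd, hlt⟩ := hd
  by_cases hpd : p ∣ d
  · -- d = p * e with e a proper divisor of m
    obtain ⟨e, rfl⟩ := hpd
    have hem : e ∣ m := by
      have h1 : p * e ∣ p * m := by rwa [mul_comm m p] at hdvd
      exact (mul_dvd_mul_iff_left hp.pos.ne').mp h1
    have helt : e < m := by
      rw [mul_comm m p] at hlt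
      exact Nat.lt_of_mul_lt_mul_left hlt
    have he0 : 0 < e := Nat.pos_of_dvd_of_pos hem hm0
    obtain ⟨c, hc⟩ := hem
    have hc2 : 2 ≤ c := by
      rcases Nat.lt_or_ge c 2 with h | h
      · interval_cases c <;> omega
      · exact h
    set q := c.minFac with hq_def
    have hq : q.Prime := Nat.minFac_prime (by omega)
    have hqc : q ∣ c := Nat.minFac_dvd c
    have heq : e * q ∣ m := hc ▸ mul_dvd_mul_left e hqc
    have hqm : q ∣ m := dvd_trans hqc (hc ▸ Dvd.intro_left e rfl)
    have hqp : q < p := hprime_lt q hq hqm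
    have hqe : ¬ q ∣ e := by
      intro hdvd'
      have hqq : q * q ∣ m := dvd_trans (mul_dvd_mul_right hdvd' q) heq
      exact hq.one_lt.ne' ((Nat.isUnit_iff).mp (hsf q hqq))
    have hcoeq : e.Coprime q := ((hq.coprime_iff_not_dvd).mpr hqe).symm
    have hpe : ¬ p ∣ e := fun h => hpm (dvd_trans h ⟨c, hc⟩)
    have hcoep : e.Coprime p := ((hp.coprime_iff_not_dvd).mpr hpe).symm
    -- σ(eq) < 2eq since eq ∣ m and m is deficient
    have h1 : sigma1 (e * q) < 2 * (e * q) :=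
      deficient_of_dvd_s9 heq hm0 hdef
    rw [sigma1_mul_of_coprime hcoeq, sigma1_prime hq] at h1
    -- conclude σ(ep) < 2ep
    show Deficient (p * e)
    unfold Deficient
    rw [mul_comm p e, sigma1_mul_of_coprime hcoep, sigma1_prime hp]
    set s := sigma1 e
    have key2 : (p + 1) * q ≤ (q + 1) * p := by
      rw [add_mul, add_mul, one_mul, one_mul, mul_comm p q]
      omega
    have h3 : s * (p + 1) * q ≤ s * ((q + 1) * p) := by
      rw [mul_assoc]; exact Nat.mul_le_mul_left s key2
    have h4 : s * ((q + 1) * p) < 2 * (e * q) * p := by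
      rw [← mul_assoc]
      exact (Nat.mul_lt_mul_right hp.pos).mpr h1
    have h5 : s * (p + 1) * q < 2 * (e * p) * q := by
      calc s * (p + 1) * q ≤ s * ((q + 1) * p) := h3
        _ < 2 * (e * q) * p := h4
        _ = 2 * (e * p) * q := by ring
    exact Nat.lt_of_mul_lt_mul_right h5
  · -- d ∣ m
    have hcod : p.Coprime d := (hp.coprime_iff_not_dvd).mpr hpd
    have hdm : d ∣ m := (hcod.symm).dvd_of_dvd_mul_right hdvd
    exact deficient_of_dvd_s9 hdm hm0 hdef
end
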